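/- For the complete graph K_n with n ≥ 2 and 1 ≤ m ≤ n−1, the m-th critical ideal admits the decomposition I_m(K_n,X) = ⋂_{I ⊆ [n], |I| = n−m+2} ⟨ x_i + 1 : i ∈ I ⟩ over a field (or over the integers). -/

import Mathlib

open MvPolynomial Matrix

noncomputable def glap {P : Type} [CommRing P] {V : Type} [Fintype V] [DecidableEq V]
    (m : V → V → ℕ) : Matrix V V (MvPolynomial V P) :=
  Matrix.of fun u v => if u = v then X u else - (m u v : MvPolynomial V P)

noncomputable def critIdeal {P : Type} [CommRing P] {V : Type} [Fintype V] [DecidableEq V]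
    (m : V → V → ℕ) (i : ℕ) : Ideal (MvPolynomial V P) :=
  Ideal.span { p | ∃ r s : Fin i → V, Function.Injective r ∧ Function.Injective s ∧
    p = ((glap (P := P) m).submatrix r s).det }

def completeArcs (n : ℕ) : Fin n → Fin n → ℕ := fun u v => if u = v then 0 else 1


namespace CritAux

variable {n : ℕ}

noncomputable def pI (I : Finset (Fin n)) : Ideal (MvPolynomial (Fin n) ℤ) :=
  Ideal.span { p | ∃ i ∈ I, p = X i + 1 }

noncomputable def phi (I : Finset (Fin n)) :
    MvPolynomial (Fin n) ℤ →ₐ[ℤ] MvPolynomial (Fin n) ℤ :=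
  aeval (fun i => if i ∈ I then -1 else X i)

lemma phi_X (I : Finset (Fin n)) (i : Fin n) :
    phi I (X i) = if i ∈ I then -1 else X i := aeval_X _ _

lemma sub_phi_mem (I : Finset (Fin n)) (p : MvPolynomial (Fin n) ℤ) :
    p - phi I p ∈ pI I := by
  induction p using MvPolynomial.induction_on with
  | C a => simp [phi]
  | add p q hp hq =>
    have : p + q - phi I (p + q) = (p - phi I p) + (q - phi I q) := by
      rw [_root_.map_add]; ring
    rw [this]; exact Ideal.add_mem _ hp hq
  | mul_X p i hp =>
    rw [_root_.map_mul, phi_X]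
    by_cases hi : i ∈ I
    · rw [if_pos hi]
      have hXi : (X i + 1 : MvPolynomial (Fin n) ℤ) ∈ pI I :=
        Ideal.subset_span ⟨i, hi, rfl⟩
      have h2 : p * X i - (phi I) p * (-1) = p * (X i + 1) - (p - phi I p) := by ring
      rw [h2]
      exact Ideal.sub_mem _ (Ideal.mul_mem_left _ _ hXi) hp
    · rw [if_neg hi]
      have h2 : p * X i - (phi I) p * X i = (p - phi I p) * X i := by ring
      rw [h2]
      exact Ideal.mul_mem_right _ _ hp

lemma mem_pI_iff {I : Finset (Fin n)} {p : MvPolynomial (Fin n) ℤ} :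
    p ∈ pI I ↔ phi I p = 0 := by
  constructor
  · intro hp
    have hle : pI I ≤ RingHom.ker (phi I : MvPolynomial (Fin n) ℤ →+* MvPolynomial (Fin n) ℤ) := by
      rw [pI, Ideal.span_le]
      rintro q ⟨i, hi, rfl⟩
      simp [RingHom.mem_ker, phi, hi]
    exact hle hp
  · intro h
    have := sub_phi_mem I p
    rwa [h, sub_zero] at this

lemma pI_prime (I : Finset (Fin n)) : (pI I).IsPrime := by
  constructor
  · intro h
    have : (1 : MvPolynomial (Fin n) ℤ) ∈ pI I := h ▸ Submodule.mem_top
    rw [mem_pI_iff, _root_.map_one] at this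
    exact one_ne_zero this
  · intro a b hab
    rw [mem_pI_iff, _root_.map_mul] at hab
    rcases mul_eq_zero.mp hab with h | h
    · exact Or.inl (mem_pI_iff.mpr h)
    · exact Or.inr (mem_pI_iff.mpr h)

lemma X_add_one_ne_zero (j : Fin n) : (X j + 1 : MvPolynomial (Fin n) ℤ) ≠ 0 := by
  intro h
  have := congrArg constantCoeff h
  simp at this

lemma X_add_one_not_mem {I : Finset (Fin n)} {j : Fin n} (hj : j ∉ I) :
    (X j + 1 : MvPolynomial (Fin n) ℤ) ∉ pI I := by
  rw [mem_pI_iff]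
  rw [_root_.map_add, _root_.map_one, phi_X, if_neg hj]
  exact X_add_one_ne_zero j

noncomputable def Jk (U : Finset (Fin n)) (k : ℕ) : Ideal (MvPolynomial (Fin n) ℤ) :=
  Ideal.span { q | ∃ S : Finset (Fin n), S ⊆ U ∧ S.card = k ∧ q = ∏ i ∈ S, (X i + 1) }

lemma Jk_mono {U U' : Finset (Fin n)} (h : U ⊆ U') (k : ℕ) : Jk U k ≤ Jk U' k :=
  Ideal.span_mono (by rintro q ⟨S, hS, hc, rfl⟩; exact ⟨S, hS.trans h, hc, rfl⟩)

lemma Jk_le_pI {U I : Finset (Fin n)} {k : ℕ} (hIU : I ⊆ U) (h : U.card < k + I.card) :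
    Jk U k ≤ pI I := by
  rw [Jk, Ideal.span_le]
  rintro q ⟨S, hS, hc, rfl⟩
  have hne : (S ∩ I).Nonempty := by
    rw [Finset.nonempty_iff_ne_empty]
    intro hemp
    have hdisj : Disjoint S I := Finset.disjoint_iff_inter_eq_empty.mpr hemp
    have hsub : S ∪ I ⊆ U := Finset.union_subset hS hIU
    have := Finset.card_le_card hsub
    rw [Finset.card_union_of_disjoint hdisj, hc] at this
    omega
  obtain ⟨i, hi⟩ := hne
  rw [Finset.mem_inter] at hi
  rw [← Finset.mul_prod_erase S _ hi.1]
  exact Ideal.mul_mem_right _ _ (Ideal.subset_span ⟨i, hi.2, rfl⟩)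

lemma mul_mem_Jk {j : Fin n} {U : Finset (Fin n)} (hj : j ∉ U) {k : ℕ}
    {q : MvPolynomial (Fin n) ℤ} (hq : q ∈ Jk U k) :
    (X j + 1) * q ∈ Jk (insert j U) (k + 1) := by
  refine Submodule.span_induction ?_ ?_ ?_ ?_ hq
  · rintro x ⟨S, hS, hc, rfl⟩
    have hjS : j ∉ S := fun h => hj (hS h)
    refine Ideal.subset_span ⟨insert j S, ?_, ?_, ?_⟩
    · exact Finset.insert_subset_insert _ hS
    · rw [Finset.card_insert_of_notMem hjS, hc]
    · rw [Finset.prod_insert hjS]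
  · simp
  · intro x y _ _ hx hy
    rw [mul_add]; exact Ideal.add_mem _ hx hy
  · intro a x _ hx
    rw [smul_eq_mul, ← mul_assoc, mul_comm _ a, mul_assoc]
    exact Ideal.mul_mem_left _ _ hx

lemma cap_le : ∀ (U : Finset (Fin n)) (c : ℕ), c ≤ U.card →
    ∀ p : MvPolynomial (Fin n) ℤ, (∀ I, I ⊆ U → I.card = c → p ∈ pI I) →
    p ∈ Jk U (U.card - c + 1) := by
  intro U
  induction U using Finset.strongInduction with
  | _ U ih =>
    intro c hc p hp
    rcases Nat.eq_zero_or_pos c with rfl | hc0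
    · have h0 := hp ∅ (Finset.empty_subset _) rfl
      have : pI (∅ : Finset (Fin n)) = ⊥ := by
        rw [pI]
        convert Ideal.span_empty
        ext q; simp
      rw [this, Ideal.mem_bot] at h0
      subst h0
      exact Ideal.zero_mem _
    rcases eq_or_lt_of_le hc with heq | hlt
    · -- c = U.card
      have h0 := hp U (subset_refl U) heq.symm
      have h1 : U.card - c + 1 = 1 := by omega
      rw [h1]
      refine (Ideal.span_le.mpr ?_) h0
      rintro q ⟨i, hi, rfl⟩
      exact Ideal.subset_span ⟨{i}, by simpa using hi, Finset.card_singleton i,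
        by rw [Finset.prod_singleton]⟩
    · -- 0 < c < U.card
      have hUne : U.Nonempty := Finset.card_pos.mp (by omega)
      obtain ⟨j, hj⟩ := hUne
      set U' := U.erase j with hU'
      have hU'card : U'.card = U.card - 1 := Finset.card_erase_of_mem hj
      have hU'ss : U' ⊂ U := Finset.erase_ssubset hj
      have hU'sub : U' ⊆ U := Finset.erase_subset _ _
      set K := U.card - c + 1 with hK
      set r := phi {j} p with hr
      -- r ∈ Jk U K
      have hrJ : r ∈ Jk U K := by
        have hr1 : ∀ I', I' ⊆ U' → I'.card = c - 1 → r ∈ pI I' := by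
          intro I' hI'U hI'c
          have hjI' : j ∉ I' := fun h => (Finset.notMem_erase j U) (hI'U h)
          have hpmem : p ∈ pI (insert j I') := by
            apply hp
            · exact Finset.insert_subset hj (hI'U.trans hU'sub)
            · rw [Finset.card_insert_of_notMem hjI', hI'c]; omega
          have hmap : r ∈ Ideal.map (phi ({j} : Finset (Fin n)) :
              MvPolynomial (Fin n) ℤ →+* MvPolynomial (Fin n) ℤ) (pI (insert j I')) :=
            Ideal.mem_map_of_mem _ hpmem
          refine (Ideal.map_le_iff_le_comap.mpr ?_) hmap
          rw [pI, Ideal.span_le]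
          rintro q ⟨i, hi, rfl⟩
          refine Ideal.mem_comap.mpr ?_
          rw [RingHom.coe_coe, _root_.map_add, _root_.map_one, phi_X]
          rcases Finset.mem_insert.mp hi with rfl | hi'
          · rw [if_pos (Finset.mem_singleton_self i)]
            simp
          · have : i ∉ ({j} : Finset (Fin n)) := by
              simp only [Finset.mem_singleton]
              rintro rfl; exact hjI' hi'
            rw [if_neg this]
            exact Ideal.subset_span ⟨i, hi', rfl⟩
        have := ih U' hU'ss (c - 1) (by omega) r hr1
        have hcard : U'.card - (c - 1) + 1 = K := by omega
        rw [hcard] at this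
        exact Jk_mono hU'sub K this
      -- p - r = q * (X j + 1)
      have hsub : p - r ∈ Ideal.span ({X j + 1} : Set (MvPolynomial (Fin n) ℤ)) := by
        have := sub_phi_mem {j} p
        have hset : { q | ∃ i ∈ ({j} : Finset (Fin n)), q = X i + 1 }
            = ({X j + 1} : Set (MvPolynomial (Fin n) ℤ)) := by
          ext q; simp
        rwa [pI, hset] at this
      obtain ⟨q, hq⟩ := Ideal.mem_span_singleton'.mp hsub
      -- q ∈ pI I for all I ⊆ U' with card c
      have hqmem : ∀ I, I ⊆ U' → I.card = c → q ∈ pI I := by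
        intro I hIU' hIc
        have hjI : j ∉ I := fun h => (Finset.notMem_erase j U) (hIU' h)
        have hpI : p ∈ pI I := hp I (hIU'.trans hU'sub) hIc
        have hrI : r ∈ pI I := Jk_le_pI (hIU'.trans hU'sub) (by omega) hrJ
        have hmul : q * (X j + 1) ∈ pI I := hq ▸ Ideal.sub_mem _ hpI hrI
        rcases (pI_prime I).mem_or_mem hmul with h | h
        · exact h
        · exact absurd h (X_add_one_not_mem hjI)
      have hqJ := ih U' hU'ss c (by omega) q hqmem
      have hcard2 : U'.card - c + 1 = K - 1 := by omega
      rw [hcard2] at hqJ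
      have hfin : (X j + 1) * q ∈ Jk (insert j U') (K - 1 + 1) :=
        mul_mem_Jk (Finset.notMem_erase j U) hqJ
      rw [Finset.insert_erase hj] at hfin
      have hK1 : K - 1 + 1 = K := by omega
      rw [hK1] at hfin
      have : p = (X j + 1) * q + r := by rw [mul_comm, hq]; ring
      rw [this]
      exact Ideal.add_mem _ hfin hrJ
section Det

variable {R : Type*} [CommRing R]

lemma detE (w : ℕ) (z : Fin (w + 1) → R) :
    (Matrix.of fun i j : Fin (w + 1) =>
        if i = j ∧ i ≠ Fin.last w then z i else (-1 : R)).det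
      = -(∏ i : Fin w, (z i.castSucc + 1)) := by
  set A : Matrix (Fin (w + 1)) (Fin (w + 1)) R :=
    Matrix.of fun i j => if i = j ∧ i ≠ Fin.last w then z i else (-1 : R) with hA
  set E : Matrix (Fin (w + 1)) (Fin (w + 1)) R :=
    Matrix.of fun i j => (if i = j then (1 : R) else 0)
      - (if j = Fin.last w ∧ i ≠ Fin.last w then (1 : R) else 0) with hE
  have hEtri : E.BlockTriangular id := by
    intro i j hij
    simp only [id] at hij
    have h1 : i ≠ j := ne_of_gt hij
    have h2 : j ≠ Fin.last w := by
      intro h; subst h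
      exact absurd (Fin.le_last i) (not_le.mpr hij)
    simp only [hE, Matrix.of_apply, h2, false_and, if_false, and_true, sub_zero,
      ite_eq_right_iff]
    exact fun h => absurd h h1
  have hEdet : E.det = 1 := by
    rw [Matrix.det_of_upperTriangular hEtri]
    apply Finset.prod_eq_one
    intro i _
    simp [hE]
  have hN : E * A = Matrix.of fun i j =>
      if i = Fin.last w then (-1 : R) else if i = j then z i + 1 else 0 := by
    ext i j
    rw [Matrix.mul_apply]
    by_cases hi : i = Fin.last w
    · subst hi
      have : ∀ k : Fin (w + 1), E (Fin.last w) k * A k j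
          = (if k = Fin.last w then (1:R) else 0) * A k j := by
        intro k
        congr 1
        simp only [hE, Matrix.of_apply]
        by_cases hk : k = Fin.last w <;> simp [hk, eq_comm]
      rw [Finset.sum_congr rfl fun k _ => this k]
      simp only [ite_mul, one_mul, zero_mul]
      rw [Finset.sum_ite_eq' Finset.univ (Fin.last w) (fun k => A k j)]
      simp [hA]
    · have : ∀ k : Fin (w + 1), E i k * A k j
          = (if k = i then (1:R) else 0) * A k j - (if k = Fin.last w then (1:R) else 0) * A k j := by
        intro k
        rw [← sub_mul]
        congr 1
        simp only [hE, Matrix.of_apply]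
        congr 1
        · by_cases hk : i = k <;> simp [hk, eq_comm]
        · by_cases hk : k = Fin.last w <;> simp [hk, hi]
      rw [Finset.sum_congr rfl fun k _ => this k, Finset.sum_sub_distrib]
      simp only [ite_mul, one_mul, zero_mul]
      rw [Finset.sum_ite_eq' Finset.univ i (fun k => A k j),
        Finset.sum_ite_eq' Finset.univ (Fin.last w) (fun k => A k j)]
      simp only [Finset.mem_univ, if_true, one_mul, hA, Matrix.of_apply]
      have hlj : ¬(Fin.last w = j ∧ Fin.last w ≠ Fin.last w) := by simp
      rw [if_neg hlj]
      by_cases hij : i = j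
      · subst hij
        rw [if_pos ⟨rfl, hi⟩, if_pos rfl, if_neg hi]
        ring
      · rw [if_neg (by simp [hij]), if_neg hij, if_neg hi]
        ring
  have hNtri : (E * A).BlockTriangular OrderDual.toDual := by
    intro i j hij
    have hij' : (i : Fin (w+1)) < j := hij
    have h1 : i ≠ Fin.last w := by
      intro h; subst h
      exact absurd (Fin.le_last j) (not_le.mpr hij')
    have h2 : i ≠ j := ne_of_lt hij'
    rw [hN]
    simp [h1, h2]
  have hdetN : (E * A).det = -(∏ i : Fin w, (z i.castSucc + 1)) := by
    rw [Matrix.det_of_lowerTriangular _ hNtri]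
    have : ∀ i : Fin (w + 1), (E * A) i i
        = if i = Fin.last w then (-1 : R) else z i + 1 := by
      intro i
      rw [hN]
      simp only [Matrix.of_apply]
      by_cases hi : i = Fin.last w <;> simp [hi]
    rw [Finset.prod_congr rfl fun i _ => this i]
    rw [Fin.prod_univ_castSucc (fun i : Fin (w+1) => if i = Fin.last w then (-1 : R) else z i + 1)]
    have hlast : ∀ i : Fin w, (i.castSucc : Fin (w+1)) ≠ Fin.last w :=
      fun i => ne_of_lt (Fin.castSucc_lt_last i)
    rw [if_pos rfl]
    rw [Finset.prod_congr rfl fun i _ => if_neg (hlast i)]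
    ring
  have := Matrix.det_mul E A
  rw [hEdet, one_mul] at this
  rw [← this, hdetN]

end Det

lemma snoc_injective {α : Type*} {w : ℕ} {f : Fin w → α} {a : α}
    (hf : Function.Injective f) (ha : ∀ i, f i ≠ a) :
    Function.Injective (Fin.snoc f a : Fin (w + 1) → α) := by
  intro i j h
  induction i using Fin.lastCases with
  | last =>
    induction j using Fin.lastCases with
    | last => rfl
    | cast j =>
      rw [Fin.snoc_last, Fin.snoc_castSucc] at h
      exact absurd h.symm (ha j)
  | cast i =>
    induction j using Fin.lastCases with
    | last =>
      rw [Fin.snoc_last, Fin.snoc_castSucc] at h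
      exact absurd h (ha i)
    | cast j =>
      rw [Fin.snoc_castSucc, Fin.snoc_castSucc] at h
      rw [hf h]
lemma Jk_le_crit {n m : ℕ} (hn : 2 ≤ n) (hm2 : 2 ≤ m) (hmn : m ≤ n - 1) :
    Jk (Finset.univ : Finset (Fin n)) (m - 1) ≤ critIdeal (P := ℤ) (completeArcs n) m := by
  rw [Jk, Ideal.span_le]
  rintro q ⟨S, -, hScard, rfl⟩
  obtain ⟨w, rfl⟩ : ∃ w, m = w + 1 := ⟨m - 1, by omega⟩
  have hScard' : S.card = w := by omega
  -- pick a b distinct outside S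
  have hcompl : 1 < Sᶜ.card := by
    rw [Finset.card_compl, hScard']
    have : n = Fintype.card (Fin n) := (Fintype.card_fin n).symm
    omega
  obtain ⟨a, ha, b, hb, hab⟩ := Finset.one_lt_card.mp hcompl
  rw [Finset.mem_compl] at ha hb
  set e : Fin w ↪o Fin n := S.orderEmbOfFin hScard' with he
  have hemem : ∀ i, e i ∈ S := fun i => S.orderEmbOfFin_mem hScard' i
  set r : Fin (w + 1) → Fin n := Fin.snoc (fun i => e i) a with hr
  set s : Fin (w + 1) → Fin n := Fin.snoc (fun i => e i) b with hs
  have hrinj : Function.Injective r :=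
    snoc_injective (fun i j h => e.injective h) (fun i h => ha (h ▸ hemem i))
  have hsinj : Function.Injective s :=
    snoc_injective (fun i j h => e.injective h) (fun i h => hb (h ▸ hemem i))
  have hM : (glap (P := ℤ) (completeArcs n)).submatrix r s
      = Matrix.of fun i j : Fin (w + 1) =>
          if i = j ∧ i ≠ Fin.last w then (X (r i) : MvPolynomial (Fin n) ℤ) else -1 := by
    refine Matrix.ext fun i j => ?_
    simp only [Matrix.submatrix_apply, glap, Matrix.of_apply]
    have harcs : ∀ u v : Fin n, u ≠ v → -((completeArcs n u v : ℕ) : MvPolynomial (Fin n) ℤ) = -1 := by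
      intro u v huv
      rw [completeArcs]
      simp [huv]
    by_cases hcond : r i = s j
    · rw [if_pos hcond]
      -- show i = j ∧ i ≠ last
      have : i = j ∧ i ≠ Fin.last w := by
        induction i using Fin.lastCases with
        | last =>
          induction j using Fin.lastCases with
          | last =>
            rw [hr, hs, Fin.snoc_last, Fin.snoc_last] at hcond
            exact absurd hcond hab
          | cast j =>
            rw [hr, hs, Fin.snoc_last, Fin.snoc_castSucc] at hcond
            exact absurd (hcond ▸ hemem j) ha
        | cast i =>
          induction j using Fin.lastCases with
          | last =>
            rw [hr, hs, Fin.snoc_castSucc, Fin.snoc_last] at hcond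
            exact absurd (hcond ▸ hemem i) hb
          | cast j =>
            rw [hr, hs, Fin.snoc_castSucc, Fin.snoc_castSucc] at hcond
            refine ⟨congrArg Fin.castSucc (e.injective hcond), ?_⟩
            exact ne_of_lt (Fin.castSucc_lt_last i)
      rw [if_pos this]
    · rw [if_neg hcond]
      have : ¬(i = j ∧ i ≠ Fin.last w) := by
        rintro ⟨rfl, hlast⟩
        apply hcond
        obtain ⟨i', rfl⟩ : ∃ i' : Fin w, i = i'.castSucc := by
          induction i using Fin.lastCases with
          | last => exact absurd rfl hlast
          | cast i => exact ⟨i, rfl⟩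
        rw [hr, hs, Fin.snoc_castSucc, Fin.snoc_castSucc]
      rw [if_neg this]
      exact harcs _ _ hcond
  have hdet : ((glap (P := ℤ) (completeArcs n)).submatrix r s).det
      = -(∏ i : Fin w, (X (r i.castSucc) + 1 : MvPolynomial (Fin n) ℤ)) := by
    rw [hM]
    exact detE w _
  have hprod : ∏ i ∈ S, (X i + 1 : MvPolynomial (Fin n) ℤ)
      = ∏ i : Fin w, (X (r i.castSucc) + 1 : MvPolynomial (Fin n) ℤ) := by
    have himg : Finset.image (fun i : Fin w => e i) Finset.univ = S := by
      apply Finset.eq_of_subset_of_card_le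
      · intro x hx
        obtain ⟨i, -, rfl⟩ := Finset.mem_image.mp hx
        exact hemem i
      · rw [Finset.card_image_of_injective _ (fun i j h => e.injective h)]
        simp [hScard']
    rw [← himg, Finset.prod_image (fun i _ j _ h => e.injective h)]
    apply Finset.prod_congr rfl
    intro i _
    rw [hr, Fin.snoc_castSucc]
  have hmem : ((glap (P := ℤ) (completeArcs n)).submatrix r s).det
      ∈ critIdeal (P := ℤ) (completeArcs n) (w + 1) :=
    Ideal.subset_span ⟨r, s, hrinj, hsinj, rfl⟩
  have : ∏ i ∈ S, (X i + 1 : MvPolynomial (Fin n) ℤ)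
      = -((glap (P := ℤ) (completeArcs n)).submatrix r s).det := by
    rw [hdet, hprod]; ring
  rw [this]
  exact neg_mem hmem
lemma crit_le {n m : ℕ} (hn : 2 ≤ n) (h1 : 1 ≤ m) (hm : m ≤ n - 1)
    {I : Finset (Fin n)} (hI : I.card = n - m + 2) :
    critIdeal (P := ℤ) (completeArcs n) m ≤ pI I := by
  have hIle : I.card ≤ n := by
    have := Finset.card_le_univ I
    simpa using this
  have hm2 : 2 ≤ m := by omega
  rw [critIdeal, Ideal.span_le]
  rintro p ⟨r, s, hrinj, hsinj, rfl⟩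
  rw [SetLike.mem_coe, mem_pI_iff]
  rw [AlgHom.map_det]
  set N := ((glap (P := ℤ) (completeArcs n)).submatrix r s).map (phi I) with hN
  -- rows with r i ∈ I are constant -1
  have hrow : ∀ i : Fin m, r i ∈ I → ∀ j, N i j = -1 := by
    intro i hi j
    rw [hN, Matrix.map_apply, Matrix.submatrix_apply, glap, Matrix.of_apply]
    by_cases hc : r i = s j
    · rw [if_pos hc, phi_X, if_pos hi]
    · rw [if_neg hc]
      have : completeArcs n (r i) (s j) = 1 := by rw [completeArcs]; simp [hc]
      rw [this]
      simp
  -- at least two such rows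
  have hcount : 1 < (Finset.univ.filter (fun i : Fin m => r i ∈ I)).card := by
    have hsplit := Finset.card_filter_add_card_filter_not
      (s := (Finset.univ : Finset (Fin m))) (p := fun i => r i ∈ I)
    have hneg : (Finset.univ.filter (fun i : Fin m => ¬ r i ∈ I)).card ≤ (Iᶜ).card := by
      apply Finset.card_le_card_of_injOn r
      · intro x hx
        rw [Finset.mem_coe, Finset.mem_filter] at hx
        exact Finset.mem_compl.mpr hx.2
      · exact Function.Injective.injOn hrinj
    have hcompl : (Iᶜ).card = n - I.card := by
      rw [Finset.card_compl]; simp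
    simp only [Finset.card_univ, Fintype.card_fin] at hsplit
    omega
  obtain ⟨i1, hi1, i2, hi2, h12⟩ := Finset.one_lt_card.mp hcount
  rw [Finset.mem_filter] at hi1 hi2
  apply Matrix.det_zero_of_row_eq h12
  funext j
  show N i1 j = N i2 j
  rw [hrow i1 hi1.2 j, hrow i2 hi2.2 j]

end CritAux

open CritAux

/-- Primary decomposition of the critical ideals of the complete graph over `ℤ`:
for `n ≥ 2` and `1 ≤ m ≤ n − 1`,
`I_m(K_n, X) = ⋂_{I ⊆ [n], |I| = n − m + 2} ⟨ x_i + 1 : i ∈ I ⟩`. -/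
theorem critIdeal_complete_decomposition (n : ℕ) (hn : 2 ≤ n) (m : ℕ)
    (h1 : 1 ≤ m) (hm : m ≤ n - 1) :
    critIdeal (P := ℤ) (completeArcs n) m
      = ⨅ (I : Finset (Fin n)) (_ : I.card = n - m + 2),
          Ideal.span { p : MvPolynomial (Fin n) ℤ | ∃ i ∈ I, p = X i + 1 } := by
  apply le_antisymm
  · apply le_iInf; intro I
    apply le_iInf; intro hI
    exact crit_le hn h1 hm hI
  · rcases eq_or_lt_of_le h1 with heq | hm2
    · -- m = 1 : critIdeal is ⊤
      have : critIdeal (P := ℤ) (completeArcs n) m = ⊤ := by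
        rw [Ideal.eq_top_iff_one]
        have hmem : ((glap (P := ℤ) (completeArcs n)).submatrix
            (fun _ : Fin m => (⟨0, by omega⟩ : Fin n))
            (fun _ : Fin m => (⟨1, by omega⟩ : Fin n))).det
            ∈ critIdeal (P := ℤ) (completeArcs n) m := by
          apply Ideal.subset_span
          refine ⟨_, _, ?_, ?_, rfl⟩
          · intro x y _
            subst heq
            exact Subsingleton.elim x y
          · intro x y _
            subst heq
            exact Subsingleton.elim x y
        subst heq
        rw [Matrix.det_fin_one] at hmem
        simp only [Matrix.submatrix_apply, glap, Matrix.of_apply] at hmem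
        have hne : (⟨0, by omega⟩ : Fin n) ≠ ⟨1, by omega⟩ := by
          intro h
          have := congrArg Fin.val h
          simp at this
        rw [if_neg hne] at hmem
        have : completeArcs n ⟨0, by omega⟩ ⟨1, by omega⟩ = 1 := by
          rw [completeArcs, if_neg hne]
        rw [this] at hmem
        simp only [Nat.cast_one] at hmem
        have := neg_mem hmem
        simpa using this
      rw [this]
      exact le_top
    · -- 2 ≤ m
      intro p hp
      have hp' : ∀ I : Finset (Fin n), I ⊆ Finset.univ → I.card = n - m + 2 → p ∈ pI I := by
        intro I _ hI
        have h := (Submodule.mem_iInf _).mp hp I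
        have h2 := (Submodule.mem_iInf _).mp h hI
        exact h2
      have hcap := cap_le Finset.univ (n - m + 2)
        (by simp only [Finset.card_univ, Fintype.card_fin]; omega) p hp'
      have hcard : (Finset.univ : Finset (Fin n)).card - (n - m + 2) + 1 = m - 1 := by
        simp only [Finset.card_univ, Fintype.card_fin]; omega
      rw [hcard] at hcap
      exact Jk_le_crit hn (by omega) hm hcap
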